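/- (Hilbert's Nullstellensatz over quaternions, one variable) A polynomial F ∈ ℍ[x] satisfies F(p) = 0 for every p in the zero locus 𝓥(I) of a left ideal I of ℍ[x] if and only if for every a ∈ ℍ there exists a natural number N ≥ 1 such that (aF)^N ∈ I + I·(aF) + I·(aF)² + ⋯ + I·(aF)^N. -/

import Mathlib

open Polynomial MulOpposite

noncomputable section

abbrev Hq := Quaternion ℝ

namespace NSQ

/-- coefficientwise star (conjugate) of a polynomial over the quaternions -/
def pc (P : Hq[X]) : Hq[X] :=
  unop ((Polynomial.opRingEquiv Hq).symm (P.map (starRingEquiv : Hq ≃+* Hqᵐᵒᵖ)))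

lemma pc_coeff (P : Hq[X]) (k : ℕ) : (pc P).coeff k = star (P.coeff k) := by
  have h := Polynomial.coeff_opRingEquiv (R := Hq)
    ((Polynomial.opRingEquiv Hq).symm (P.map (starRingEquiv : Hq ≃+* Hqᵐᵒᵖ))) k
  rw [RingEquiv.apply_symm_apply, Polynomial.coeff_map] at h
  have h2 := congrArg unop h
  simpa [pc] using h2.symm

lemma pc_add (P Q : Hq[X]) : pc (P + Q) = pc P + pc Q := by
  refine Polynomial.ext fun k => ?_
  simp [pc_coeff, coeff_add]

lemma pc_mul (P Q : Hq[X]) : pc (P * Q) = pc Q * pc P := by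
  unfold pc
  rw [Polynomial.map_mul, map_mul, unop_mul]

lemma pc_pc (P : Hq[X]) : pc (pc P) = P := by
  refine Polynomial.ext fun k => ?_
  simp [pc_coeff]

lemma pc_C (a : Hq) : pc (C a) = C (star a) := by
  refine Polynomial.ext fun k => ?_
  simp [pc_coeff, coeff_C, apply_ite (star : Hq → Hq)]

lemma pc_X : pc (X : Hq[X]) = X := by
  refine Polynomial.ext fun k => ?_
  simp [pc_coeff, coeff_X, apply_ite (star : Hq → Hq)]

lemma pc_one : pc (1 : Hq[X]) = 1 := by
  have := pc_C 1; simpa using this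

lemma pc_zero : pc (0 : Hq[X]) = 0 := by
  refine Polynomial.ext fun k => ?_
  simp [pc_coeff]

lemma pc_sub (P Q : Hq[X]) : pc (P - Q) = pc P - pc Q := by
  refine Polynomial.ext fun k => ?_
  simp [pc_coeff, coeff_sub, sub_eq_add_neg]

lemma pc_eq_zero {P : Hq[X]} (h : pc P = 0) : P = 0 := by
  rw [← pc_pc P, h, pc_zero]

lemma pc_support (P : Hq[X]) : (pc P).support = P.support := by
  ext k
  simp [mem_support_iff, pc_coeff]

lemma pc_degree (P : Hq[X]) : (pc P).degree = P.degree := by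
  rw [Polynomial.degree, Polynomial.degree, pc_support]

lemma pc_natDegree (P : Hq[X]) : (pc P).natDegree = P.natDegree := by
  unfold Polynomial.natDegree
  rw [pc_degree]

lemma pc_monic {P : Hq[X]} (h : P.Monic) : (pc P).Monic := by
  have : (pc P).coeff (pc P).natDegree = star (P.coeff P.natDegree) := by
    rw [pc_natDegree, pc_coeff]
  unfold Polynomial.Monic Polynomial.leadingCoeff
  rw [this]
  have := h.leadingCoeff
  unfold Polynomial.leadingCoeff at this
  rw [this]; simp

/-- Right division by a monic polynomial in the (noncommutative) quaternion
polynomial ring : `F = Q * H + R`. -/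
theorem right_div (Hp F : Hq[X]) (hm : Hp.Monic) :
    ∃ Q R : Hq[X], F = Q * Hp + R ∧ R.degree < Hp.degree := by
  have hm' : (pc Hp).Monic := pc_monic hm
  have hdiv := Polynomial.modByMonic_add_div (pc F) (pc Hp)
  refine ⟨pc ((pc F) /ₘ (pc Hp)), pc ((pc F) %ₘ (pc Hp)), ?_, ?_⟩
  · conv_lhs => rw [← pc_pc F, ← hdiv]
    rw [pc_add, pc_mul, pc_pc]
    exact add_comm _ _
  · rw [pc_degree, ← pc_degree Hp]
    exact Polynomial.degree_modByMonic_lt _ hm'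

end NSQ
namespace NSQ

/-- centrality of constants that commute with everything -/
lemma C_central {a : Hq} (ha : ∀ b : Hq, a * b = b * a) (P : Hq[X]) :
    C a * P = P * C a := by
  refine Polynomial.ext fun k => ?_
  rw [coeff_C_mul, coeff_mul_C, ha]

lemma Creal_comm (r : ℝ) (P : Hq[X]) : C ((r : Hq)) * P = P * C ((r : Hq)) :=
  C_central (fun b => (Quaternion.coe_commutes r b)) P

/-- eval of a product when the right factor evaluates to zero -/
lemma eval_mul_right_zero (P : Hq[X]) {Q : Hq[X]} {p : Hq} (hQ : Q.eval p = 0) :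
    (P * Q).eval p = 0 := by
  induction P using Polynomial.induction_on' with
  | add a b ha hb => rw [add_mul, eval_add, ha, hb, add_zero]
  | monomial k a =>
      rw [← C_mul_X_pow_eq_monomial, mul_assoc, X_pow_mul, ← mul_assoc,
        eval_mul_X_pow, eval_C_mul, hQ, mul_zero, zero_mul]

/-- eval of a product when the right factor's value commutes with the point -/
lemma eval_mul_comm (P : Hq[X]) {Q : Hq[X]} {p : Hq} (hQ : Commute (Q.eval p) p) :
    (P * Q).eval p = P.eval p * Q.eval p := by
  induction P using Polynomial.induction_on' with
  | add a b ha hb => rw [add_mul, eval_add, ha, hb, eval_add, add_mul]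
  | monomial k a =>
      have h1 : (monomial k a : Hq[X]) * Q = C a * (Q * X ^ k) := by
        rw [← C_mul_X_pow_eq_monomial, mul_assoc, X_pow_mul]
      rw [h1, eval_C_mul, eval_mul_X_pow, eval_monomial, mul_assoc, (hQ.pow_right k).eq,
        ← mul_assoc]

/-- the factor theorem (right roots, right factors) -/
lemma factor_theorem {P : Hq[X]} {v : Hq} :
    P.eval v = 0 ↔ ∃ Q, P = Q * (X - C v) := by
  constructor
  · intro h
    obtain ⟨Q, R, hQR, hdeg⟩ := right_div (X - C v) P (monic_X_sub_C v)
    rw [degree_X_sub_C] at hdeg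
    have hR : R = C (R.coeff 0) := Polynomial.eq_C_of_degree_le_zero (by
      exact Nat.WithBot.lt_one_iff_le_zero.mp hdeg)
    have hXv : (X - C v).eval v = 0 := by simp
    have hPR : P.eval v = R.coeff 0 := by
      rw [hQR, eval_add, eval_mul_right_zero Q hXv, zero_add]
      nth_rewrite 1 [hR]
      rw [eval_C]
    have hc : R.coeff 0 = 0 := hPR.symm.trans h
    refine ⟨Q, ?_⟩
    rw [hQR, hR, hc, map_zero, add_zero]
  · rintro ⟨Q, rfl⟩
    exact eval_mul_right_zero Q (by simp)

/-- every left ideal of `Hq[X]` is principal -/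
theorem ideal_principal (J : Ideal Hq[X]) :
    ∃ D : Hq[X], (D = 0 ∨ D.Monic) ∧ ∀ P, P ∈ J ↔ ∃ Q, P = Q * D := by
  by_cases hJ : ∀ P ∈ J, P = (0 : Hq[X])
  · refine ⟨0, Or.inl rfl, fun P => ⟨fun h => ⟨0, by simp [hJ P h]⟩, ?_⟩⟩
    rintro ⟨Q, rfl⟩
    simp only [mul_zero]
    exact J.zero_mem
  · push_neg at hJ
    obtain ⟨P₀, hP₀J, hP₀⟩ := hJ
    have hex : ∃ d : ℕ, ∃ P, P ∈ J ∧ P ≠ 0 ∧ P.natDegree = d := ⟨P₀.natDegree, P₀, hP₀J, hP₀, rfl⟩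
    classical
    obtain ⟨D₀, hD₀J, hD₀ne, hD₀deg⟩ := Nat.find_spec hex
    set l := D₀.leadingCoeff with hl
    have hlne : l ≠ 0 := leadingCoeff_ne_zero.mpr hD₀ne
    set D := C l⁻¹ * D₀ with hD
    have hDJ : D ∈ J := J.mul_mem_left _ hD₀J
    have hClne : (C l⁻¹ : Hq[X]) ≠ 0 := by
      simpa using inv_ne_zero hlne
    have hDne : D ≠ 0 := mul_ne_zero hClne hD₀ne
    have hDdeg : D.degree = D₀.degree := by
      rw [hD, degree_mul, degree_C (inv_ne_zero hlne), zero_add]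
    have hDnat : D.natDegree = D₀.natDegree := natDegree_eq_of_degree_eq hDdeg
    have hDmonic : D.Monic := by
      have : D.leadingCoeff = l⁻¹ * l := by
        rw [hD, leadingCoeff_mul, leadingCoeff_C]
      unfold Polynomial.Monic
      rw [this, inv_mul_cancel₀ hlne]
    refine ⟨D, Or.inr hDmonic, fun P => ⟨fun hP => ?_, ?_⟩⟩
    · obtain ⟨Q, R, hQR, hdeg⟩ := right_div D P hDmonic
      have hRJ : R ∈ J := by
        have : R = P - Q * D := by rw [hQR]; abel
        rw [this]
        exact J.sub_mem hP (J.mul_mem_left Q hDJ)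
      by_cases hR : R = 0
      · exact ⟨Q, by rw [hQR, hR, add_zero]⟩
      · exfalso
        have : R.natDegree < D.natDegree := Polynomial.natDegree_lt_natDegree hR hdeg
        rw [hDnat, hD₀deg] at this
        exact Nat.find_min hex this ⟨R, hRJ, hR, rfl⟩
    · rintro ⟨Q, rfl⟩
      exact J.mul_mem_left Q hDJ

end NSQ
namespace NSQ

open Quaternion

/-- real part of product is symmetric -/
lemma q_mul_re_comm (x y : Hq) : (x*y).re = (y*x).re := by
  simp only [Quaternion.re_mul]; ring

/-- the characteristic (companion) identity of a quaternion -/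
lemma q_char (v : Hq) : v*v - ((2*v.re : ℝ) : Hq) * v + ((Quaternion.normSq v : ℝ) : Hq) = 0 := by
  have h1 : ((2*v.re : ℝ) : Hq) = v + star v := (Quaternion.self_add_star' v).symm
  have h2 : ((Quaternion.normSq v : ℝ) : Hq) = v * star v := (Quaternion.self_mul_star v).symm
  have h3 : star v * v = v * star v := star_comm_self' v
  rw [h1, h2, add_mul, h3]
  abel

/-- the characteristic polynomial of (the conjugacy class of) a quaternion -/
def chp (q : Hq) : Hq[X] :=
  X^2 - C ((2*q.re : ℝ) : Hq) * X + C ((Quaternion.normSq q : ℝ) : Hq)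

lemma chp_comm (q : Hq) (P : Hq[X]) : chp q * P = P * chp q := by
  have hX : Commute (X : Hq[X]) P := X_mul
  have hs : Commute (C ((2*q.re : ℝ) : Hq)) P := Creal_comm _ P
  have hn : Commute (C ((Quaternion.normSq q : ℝ) : Hq)) P := Creal_comm _ P
  exact (((hX.pow_left 2).sub_left (hs.mul_left hX)).add_left hn).eq

lemma chp_eval (q v : Hq) :
    (chp q).eval v = v*v - ((2*q.re : ℝ) : Hq) * v + ((Quaternion.normSq q : ℝ) : Hq) := by
  unfold chp
  simp [eval_add, eval_sub, eval_mul_X_pow, sq, eval_C_mul]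

lemma chp_eval_self (q : Hq) : (chp q).eval q = 0 := by
  rw [chp_eval]; exact q_char q

lemma chp_star (q : Hq) : chp (star q) = chp q := by
  unfold chp
  rw [Quaternion.re_star, Quaternion.normSq_star]

lemma chp_eval_star (q : Hq) : (chp q).eval (star q) = 0 := by
  rw [← chp_star, chp_eval]
  have := q_char (star q)
  simpa [Quaternion.normSq_star] using this

lemma chp_degree (q : Hq) : (chp q).degree = 2 := by
  unfold chp
  compute_degree!

lemma chp_monic (q : Hq) : (chp q).Monic := by
  unfold chp
  monicity!

lemma chp_ne_zero (q : Hq) : chp q ≠ 0 := (chp_monic q).ne_zero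

lemma chp_natDegree (q : Hq) : (chp q).natDegree = 2 :=
  natDegree_eq_of_degree_eq_some (chp_degree q)

lemma pc_chp (q : Hq) : pc (chp q) = chp q := by
  unfold chp
  rw [sq, pc_add, pc_sub, pc_mul, pc_mul, pc_X, pc_C, pc_C, Quaternion.star_coe,
    Quaternion.star_coe, X_mul (p := C ((2*q.re : ℝ) : Hq))]

lemma chp_factor (q : Hq) : chp q = (X - C q) * (X - C (star q)) := by
  have hexp : (X - C q) * (X - C (star q)) =
      X*X - (C q + C (star q)) * X + C q * C (star q) := by
    rw [sub_mul, mul_sub, mul_sub, X_mul (p := C (star q)), add_mul]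
    abel
  rw [hexp, ← C_mul, ← C_add, Quaternion.self_add_star', Quaternion.self_mul_star, ← sq]
  rfl

lemma chp_factor' (q : Hq) : chp q = (X - C (star q)) * (X - C q) := by
  have h := chp_factor (star q)
  rw [star_star, chp_star] at h
  exact h

/-- congruence modulo the (central) characteristic polynomial -/
def MEq (q : Hq) (A B : Hq[X]) : Prop := ∃ W, A = B + W * chp q

lemma meq_refl (q : Hq) (A : Hq[X]) : MEq q A A := ⟨0, by simp⟩

lemma meq_of_eq {q : Hq} {A B : Hq[X]} (h : A = B) : MEq q A B := h ▸ meq_refl q A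

lemma meq_symm {q : Hq} {A B : Hq[X]} (h : MEq q A B) : MEq q B A := by
  obtain ⟨W, hW⟩ := h
  refine ⟨-W, ?_⟩
  rw [hW, neg_mul]
  abel

lemma meq_trans {q : Hq} {A B C' : Hq[X]} (h1 : MEq q A B) (h2 : MEq q B C') : MEq q A C' := by
  obtain ⟨W, hW⟩ := h1; obtain ⟨V, hV⟩ := h2
  refine ⟨W + V, ?_⟩
  rw [hW, hV, add_mul]
  abel

lemma meq_add {q : Hq} {A B A' B' : Hq[X]} (h1 : MEq q A A') (h2 : MEq q B B') :
    MEq q (A + B) (A' + B') := by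
  obtain ⟨W, hW⟩ := h1; obtain ⟨V, hV⟩ := h2
  refine ⟨W + V, ?_⟩
  rw [hW, hV, add_mul]
  abel

lemma meq_mul {q : Hq} {A B A' B' : Hq[X]} (h1 : MEq q A A') (h2 : MEq q B B') :
    MEq q (A * B) (A' * B') := by
  obtain ⟨W, hW⟩ := h1; obtain ⟨V, hV⟩ := h2
  refine ⟨A' * V + W * B' + W * V * chp q, ?_⟩
  rw [hW, hV]
  have hc1 : chp q * B' = B' * chp q := chp_comm q B'
  have hc2 : chp q * (V * chp q) = (V * chp q) * chp q := chp_comm q _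
  calc (A' + W * chp q) * (B' + V * chp q)
      = A'*B' + A'*(V*chp q) + (W*(chp q*B') + W*(chp q*(V*chp q))) := by noncomm_ring
    _ = A'*B' + A'*(V*chp q) + (W*(B'*chp q) + W*((V*chp q)*chp q)) := by rw [hc1, hc2]
    _ = A' * B' + (A' * V + W * B' + W * V * chp q) * chp q := by noncomm_ring

lemma meq_pc {q : Hq} {A B : Hq[X]} (h : MEq q A B) : MEq q (pc A) (pc B) := by
  obtain ⟨W, hW⟩ := h
  refine ⟨pc W, ?_⟩
  rw [hW, pc_add, pc_mul, pc_chp, chp_comm]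

lemma meq_reduce (q : Hq) (A : Hq[X]) : ∃ α β : Hq, MEq q A (C α * X + C β) := by
  obtain ⟨Q, R, hQR, hdeg⟩ := right_div (chp q) A (chp_monic q)
  rw [chp_degree] at hdeg
  have hle : R.degree ≤ 1 := by
    rcases hd : R.degree with _ | nn
    · exact bot_le
    · rw [hd, WithBot.some_eq_coe] at hdeg
      have h22 : (2 : WithBot ℕ) = ((2:ℕ) : WithBot ℕ) := rfl
      rw [h22] at hdeg
      have h2 : nn < 2 := WithBot.coe_lt_coe.mp hdeg
      have h1 : nn ≤ 1 := by omega
      exact WithBot.coe_le_coe.mpr h1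
  have hR : R = C (R.coeff 1) * X + C (R.coeff 0) := by
    have h2 := Polynomial.eq_X_add_C_of_degree_le_one hle
    rw [h2]; simp
  refine ⟨R.coeff 1, R.coeff 0, Q, ?_⟩
  rw [hQR, ← hR]
  exact add_comm _ _

lemma meq_unique {q : Hq} {α β α' β' : Hq}
    (h : MEq q (C α * X + C β) (C α' * X + C β')) : α = α' ∧ β = β' := by
  obtain ⟨W, hW⟩ := h
  have hWz : W = 0 := by
    by_contra hne
    have hS : C α * X + C β - (C α' * X + C β') = W * chp q := by
      rw [hW]; abel
    have hd1 : (C α * X + C β - (C α' * X + C β')).degree ≤ 1 :=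
      le_trans (Polynomial.degree_sub_le _ _) (by
        simp only [max_le_iff]
        exact ⟨Polynomial.degree_linear_le, Polynomial.degree_linear_le⟩)
    have hd2 : (W * chp q).degree = W.degree + 2 := by rw [degree_mul, chp_degree]
    have hge : (2 : WithBot ℕ) ≤ (W * chp q).degree := by
      rw [hd2]
      have h0 : (0 : WithBot ℕ) ≤ W.degree := Polynomial.zero_le_degree_iff.mpr hne
      calc (2 : WithBot ℕ) = 0 + 2 := by norm_num
        _ ≤ W.degree + 2 := by gcongr
    rw [← hS] at hge
    have : (2 : WithBot ℕ) ≤ 1 := le_trans hge hd1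
    norm_num at this
  rw [hWz, zero_mul, add_zero] at hW
  constructor
  · have := congrArg (fun P => Polynomial.coeff P 1) hW
    simpa using this
  · have := congrArg (fun P => Polynomial.coeff P 0) hW
    simpa using this

lemma eval_of_meq_linfac {q v : Hq} {P W : Hq[X]} (hv : (chp q).eval v = 0)
    (h : MEq q P (W * (X - C v))) : P.eval v = 0 := by
  obtain ⟨W', hW'⟩ := h
  rw [hW', eval_add, eval_mul_right_zero W (by simp), eval_mul_right_zero W' hv, add_zero]

lemma eval_of_meq_lin {q v : Hq} {P : Hq[X]} {α β : Hq} (hv : (chp q).eval v = 0)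
    (h : MEq q P (C α * X + C β)) : P.eval v = α * v + β := by
  obtain ⟨W', hW'⟩ := h
  rw [hW', eval_add, eval_add, eval_mul_right_zero W' hv, eval_C_mul, eval_X, eval_C, add_zero]

lemma meq_zero_dvd {q : Hq} {P : Hq[X]} (h : MEq q P 0) : ∃ E, P = E * chp q := by
  obtain ⟨W, hW⟩ := h
  exact ⟨W, by rw [hW, zero_add]⟩

/-- the fundamental multiplication/reduction rule for linear representatives -/
lemma mulred (q : Hq) (a b c d : Hq) :
    MEq q ((C a * X + C b) * (C c * X + C d))
      (C (a*c*((2*q.re : ℝ) : Hq) + a*d + b*c) * X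
        + C (b*d - a*c*((Quaternion.normSq q : ℝ) : Hq))) := by
  have CXC : ∀ x y : Hq, C x * X * C y = C (x*y) * X := by
    intro x y
    rw [mul_assoc, X_mul, ← mul_assoc, ← C_mul]
  have hexp : (C a * X + C b) * (C c * X + C d) =
      C (a*c) * X^2 + C (a*d + b*c) * X + C (b*d) := by
    calc (C a * X + C b) * (C c * X + C d)
        = (C a * X * C c) * X + (C a * X * C d) + (C b * C c) * X + C b * C d := by noncomm_ring
      _ = (C (a*c) * X) * X + C (a*d) * X + C (b*c) * X + C (b*d) := by
          rw [CXC, CXC, ← C_mul, ← C_mul]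
      _ = C (a*c) * X^2 + C (a*d + b*c) * X + C (b*d) := by
          rw [C_add, add_mul]; noncomm_ring
  have hX2 : MEq q ((X : Hq[X])^2)
      (C ((2*q.re : ℝ) : Hq) * X - C ((Quaternion.normSq q : ℝ) : Hq)) := by
    refine ⟨1, ?_⟩
    unfold chp
    noncomm_ring
  rw [hexp]
  have h1 : MEq q (C (a*c) * X^2)
      (C (a*c) * (C ((2*q.re : ℝ) : Hq) * X - C ((Quaternion.normSq q : ℝ) : Hq))) :=
    meq_mul (meq_refl q _) hX2
  have h2 : MEq q (C (a*c) * X^2 + C (a*d + b*c) * X + C (b*d))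
      (C (a*c) * (C ((2*q.re : ℝ) : Hq) * X - C ((Quaternion.normSq q : ℝ) : Hq))
        + C (a*d + b*c) * X + C (b*d)) :=
    meq_add (meq_add h1 (meq_refl q _)) (meq_refl q _)
  refine meq_trans h2 (meq_of_eq ?_)
  simp only [C_add, C_sub, C_mul]
  noncomm_ring

end NSQ
namespace NSQ

open Quaternion

/-- component polynomial of a quaternion polynomial -/
def cp (π : Hq → ℝ) (h0 : π 0 = 0) (P : Hq[X]) : ℝ[X] :=
  ⟨⟨P.toFinsupp.coeff.mapRange π h0⟩⟩

lemma cp_coeff (π : Hq → ℝ) (h0 : π 0 = 0) (P : Hq[X]) (k : ℕ) :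
    (cp π h0 P).coeff k = π (P.coeff k) := by
  rcases P with ⟨f⟩
  simp [cp, Polynomial.coeff]

lemma cp_natDegree_le (π : Hq → ℝ) (h0 : π 0 = 0) (P : Hq[X]) :
    (cp π h0 P).natDegree ≤ P.natDegree := by
  refine Polynomial.natDegree_le_iff_coeff_eq_zero.mpr fun N hN => ?_
  rw [cp_coeff, Polynomial.coeff_eq_zero_of_natDegree_lt hN, h0]

lemma cp_eval (π : Hq → ℝ) (h0 : π 0 = 0)
    (hadd : ∀ x y : Hq, π (x + y) = π x + π y)
    (hsm : ∀ (c : ℝ) (x : Hq), π ((c : Hq) * x) = c * π x)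
    (P : Hq[X]) (r : ℝ) : (cp π h0 P).eval r = π (P.eval ((r : Hq))) := by
  have h1 : (cp π h0 P).natDegree < P.natDegree + 1 :=
    Nat.lt_succ_of_le (cp_natDegree_le π h0 P)
  have h2 : P.natDegree < P.natDegree + 1 := Nat.lt_succ_self _
  rw [Polynomial.eval_eq_sum_range' h1, Polynomial.eval_eq_sum_range' h2]
  let πh : Hq →+ ℝ := AddMonoidHom.mk' π hadd
  have : π (∑ i ∈ Finset.range (P.natDegree + 1), P.coeff i * ((r:Hq)) ^ i)
      = ∑ i ∈ Finset.range (P.natDegree + 1), π (P.coeff i * ((r:Hq)) ^ i) :=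
    map_sum πh _ _
  rw [this]
  refine Finset.sum_congr rfl fun i _ => ?_
  rw [cp_coeff]
  have hc : P.coeff i * ((r:Hq)) ^ i = ((r^i : ℝ) : Hq) * P.coeff i := by
    rw [← Quaternion.coe_pow, Quaternion.coe_commutes]
  rw [hc, hsm]
  ring

lemma eval_all_real_zero {P : Hq[X]} (h : ∀ r : ℝ, P.eval ((r : Hq)) = 0) : P = 0 := by
  have key : ∀ (π : Hq → ℝ) (h0 : π 0 = 0),
      (∀ x y : Hq, π (x + y) = π x + π y) →
      (∀ (c : ℝ) (x : Hq), π ((c : Hq) * x) = c * π x) →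
      ∀ k, π (P.coeff k) = 0 := by
    intro π h0 hadd hsm k
    have hzero : cp π h0 P = 0 := by
      apply Polynomial.funext
      intro r
      rw [cp_eval π h0 hadd hsm, h r, h0, Polynomial.eval_zero]
    have := congrArg (fun Q => Polynomial.coeff Q k) hzero
    simpa [cp_coeff] using this
  refine Polynomial.ext fun k => ?_
  have hre := key (fun x => x.re) rfl (fun x y => rfl)
    (fun c x => by rw [Quaternion.coe_mul_eq_smul]; simp) k
  have himI := key (fun x => x.imI) rfl (fun x y => rfl)
    (fun c x => by rw [Quaternion.coe_mul_eq_smul]; simp) k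
  have himJ := key (fun x => x.imJ) rfl (fun x y => rfl)
    (fun c x => by rw [Quaternion.coe_mul_eq_smul]; simp) k
  have himK := key (fun x => x.imK) rfl (fun x y => rfl)
    (fun c x => by rw [Quaternion.coe_mul_eq_smul]; simp) k
  ext
  · simpa using hre
  · simpa using himI
  · simpa using himJ
  · simpa using himK

lemma eval_all_zero {P : Hq[X]} (h : ∀ p : Hq, P.eval p = 0) : P = 0 :=
  eval_all_real_zero (fun r => h _)

end NSQ
namespace NSQ

open Quaternion

lemma q_coe_algebraMap : ⇑(algebraMap ℝ Hq) = (fun r : ℝ => (r : Hq)) := by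
  exact QuaternionAlgebra.coe_algebraMap

lemma q_coe_mul_re (c : ℝ) (x : Hq) : (((c:Hq)) * x).re = c * x.re := by
  rw [Quaternion.coe_mul_eq_smul]; simp

/-- the coefficients of `F * pc F` are star-fixed (real) -/
lemma q_coe_zero_iff {x : ℝ} : ((x : Hq)) = 0 ↔ x = 0 := by
  constructor
  · intro h
    rw [show (0 : Hq) = ((0:ℝ) : Hq) by rfl] at h
    exact Quaternion.coe_injective h
  · rintro rfl; rfl

lemma pcprod_real (F : Hq[X]) (k : ℕ) : star ((F * pc F).coeff k) = (F * pc F).coeff k := by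
  rw [Polynomial.coeff_mul, star_sum]
  conv_rhs => rw [← Finset.HasAntidiagonal.map_swap_antidiagonal (n := k), Finset.sum_map]
  refine Finset.sum_congr rfl fun x _ => ?_
  simp only [Function.Embedding.coeFn_mk, Prod.fst_swap, Prod.snd_swap]
  rw [star_mul, pc_coeff, pc_coeff, star_star]

/-- a polynomial with star-fixed coefficients comes from a real polynomial -/
lemma realify (P : Hq[X]) (h : ∀ k, star (P.coeff k) = P.coeff k) :
    P = (cp (fun x => x.re) rfl P).map (algebraMap ℝ Hq) := by
  refine Polynomial.ext fun k => ?_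
  rw [Polynomial.coeff_map]
  erw [cp_coeff]
  rw [q_coe_algebraMap]
  exact ((Quaternion.star_eq_self).mp (h k))

lemma eval_map_coe {S : Type} [Semiring S] (N : ℝ[X]) (f : ℝ →+* S) (r : ℝ) :
    (N.map f).eval (f r) = f (N.eval r) := by
  rw [Polynomial.eval_map, Polynomial.eval₂_at_apply]

lemma pc_eval_real (F : Hq[X]) (r : ℝ) :
    (pc F).eval ((r : Hq)) = star (F.eval ((r : Hq))) := by
  have h1 : (pc F).natDegree < F.natDegree + 1 := by
    rw [pc_natDegree]; omega
  have h2 : F.natDegree < F.natDegree + 1 := Nat.lt_succ_self _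
  rw [Polynomial.eval_eq_sum_range' h1, Polynomial.eval_eq_sum_range' h2, star_sum]
  refine Finset.sum_congr rfl fun i _ => ?_
  rw [pc_coeff, star_mul]
  have : star (((r:Hq)) ^ i) = ((r:Hq)) ^ i := by
    rw [← Quaternion.coe_pow, Quaternion.star_coe]
  rw [this, ← Quaternion.coe_pow, Quaternion.coe_commutes, Quaternion.coe_pow]

lemma pc_lin (α β : Hq) : pc (C α * X + C β) = C (star α) * X + C (star β) := by
  rw [pc_add, pc_mul, pc_X, pc_C, pc_C, X_mul]

/-- Niven's theorem: every nonconstant quaternion polynomial has a root -/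
theorem niven (F : Hq[X]) (hdeg : 0 < F.natDegree) : ∃ p : Hq, F.eval p = 0 := by
  have hFne : F ≠ 0 := fun h => by simp [h] at hdeg
  set NN := F * pc F with hNN
  have hpcne : pc F ≠ 0 := fun h => hFne (pc_eq_zero h)
  have hNNne : NN ≠ 0 := mul_ne_zero hFne hpcne
  set Nr := cp (fun x => x.re) rfl NN with hNr
  have hNNmap : NN = Nr.map (algebraMap ℝ Hq) := realify NN (pcprod_real F)
  have hNrne : Nr ≠ 0 := by
    intro h
    rw [h, Polynomial.map_zero] at hNNmap
    exact hNNne hNNmap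
  have hinj : Function.Injective (algebraMap ℝ Hq) := fun a b hab => by
    rw [q_coe_algebraMap] at hab
    exact Quaternion.coe_injective hab
  have hNrdeg : 0 < Nr.natDegree := by
    have h1 : NN.natDegree = Nr.natDegree := by
      rw [hNNmap, Polynomial.natDegree_map_eq_of_injective hinj]
    have h2 : 0 < NN.natDegree := by
      rw [Polynomial.natDegree_mul hFne hpcne, pc_natDegree]
      omega
    omega
  set Nc := Nr.map (algebraMap ℝ ℂ) with hNc
  have hNcdeg : 0 < Nc.degree := by
    rw [hNc, Polynomial.degree_map_eq_of_injective (algebraMap ℝ ℂ).injective]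
    exact Polynomial.natDegree_pos_iff_degree_pos.mp hNrdeg
  obtain ⟨z, hz⟩ := Complex.exists_root hNcdeg
  by_cases him : z.im = 0
  · -- real root case
    set r := z.re with hr
    have hzr : z = ((r : ℝ) : ℂ) := by
      apply Complex.ext
      · simp [hr]
      · simp [him]
    have hNrr : Nr.eval r = 0 := by
      have : (Nr.map (algebraMap ℝ ℂ)).eval ((algebraMap ℝ ℂ) r) = algebraMap ℝ ℂ (Nr.eval r) :=
        eval_map_coe Nr _ r
      rw [← hNc] at this
      have hz' : Nc.eval z = 0 := hz
      rw [hzr] at hz'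
      have : algebraMap ℝ ℂ (Nr.eval r) = 0 := by
        rw [← this]
        exact hz'
      exact (map_eq_zero_iff _ (algebraMap ℝ ℂ).injective).mp this
    have hNNr : NN.eval ((r : Hq)) = 0 := by
      have := eval_map_coe Nr (algebraMap ℝ Hq) r
      rw [← hNNmap, q_coe_algebraMap] at this
      simp only at this
      rw [this, hNrr]
      exact Quaternion.coe_zero
    have hmul : NN.eval ((r:Hq)) = F.eval ((r:Hq)) * (pc F).eval ((r:Hq)) := by
      rw [hNN]
      exact eval_mul_comm F ((Quaternion.coe_commute r _).symm)
    rw [hmul, pc_eval_real, Quaternion.self_mul_star] at hNNr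
    refine ⟨((r:Hq)), ?_⟩
    exact Quaternion.normSq_eq_zero.mp (q_coe_zero_iff.mp hNNr)
  · -- nonreal root case
    set p₀ : Hq := ⟨z.re, z.im, 0, 0⟩ with hp₀
    have hp₀re : p₀.re = z.re := rfl
    have hp₀nsq : normSq p₀ = z.re^2 + z.im^2 := by
      rw [Quaternion.normSq_def']
      simp [hp₀]
    set ψr : ℝ[X] := X^2 - Polynomial.C (2*z.re) * X + Polynomial.C (z.re^2 + z.im^2) with hψr
    have hψmonic : ψr.Monic := by
      rw [hψr]; monicity!
    have hψmap : ψr.map (algebraMap ℝ Hq) = chp p₀ := by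
      rw [hψr]
      unfold chp
      simp only [Polynomial.map_add, Polynomial.map_sub, Polynomial.map_mul, Polynomial.map_pow,
        Polynomial.map_X, Polynomial.map_C, q_coe_algebraMap]
      rw [hp₀nsq]
    -- divisibility of Nr by ψr over ℝ
    have hψz : (ψr.map (algebraMap ℝ ℂ)).eval z = 0 := by
      simp only [hψr, Polynomial.map_add, Polynomial.map_sub, Polynomial.map_mul,
        Polynomial.map_pow, Polynomial.map_X, Polynomial.map_C, Polynomial.eval_add,
        Polynomial.eval_sub, Polynomial.eval_mul, Polynomial.eval_pow, Polynomial.eval_X,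
        Polynomial.eval_C]
      apply Complex.ext <;>
        simp [Complex.mul_re, Complex.mul_im, Complex.add_re, Complex.add_im, pow_two] <;> ring
    have hdvd : ψr ∣ Nr := by
      have hdm := Polynomial.modByMonic_add_div Nr ψr
      set R' := Nr %ₘ ψr with hR'
      have hdegR' : R'.degree < 2 := by
        have := Polynomial.degree_modByMonic_lt Nr hψmonic
        have hd2 : ψr.degree = 2 := by rw [hψr]; compute_degree!
        rw [hd2] at this
        exact this
      have hR'le : R'.degree ≤ 1 := by
        rcases hd : R'.degree with _ | nn
        · exact bot_le
        · rw [hd, WithBot.some_eq_coe] at hdegR'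
          have h22 : (2 : WithBot ℕ) = ((2:ℕ) : WithBot ℕ) := rfl
          rw [h22] at hdegR'
          have h2 : nn < 2 := WithBot.coe_lt_coe.mp hdegR'
          have h1 : nn ≤ 1 := by omega
          exact WithBot.coe_le_coe.mpr h1
      have hR'form := Polynomial.eq_X_add_C_of_degree_le_one hR'le
      -- evaluate the division equation at z over ℂ
      have hev : (R'.map (algebraMap ℝ ℂ)).eval z = 0 := by
        have hmapeq : Nc = ψr.map (algebraMap ℝ ℂ) * ((Nr /ₘ ψr).map (algebraMap ℝ ℂ))
            + R'.map (algebraMap ℝ ℂ) := by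
          rw [hNc, ← Polynomial.map_mul, ← Polynomial.map_add]
          congr 1
          linear_combination -hdm
        have : Nc.eval z = 0 := hz
        rw [hmapeq] at this
        simp only [Polynomial.eval_add, Polynomial.eval_mul, hψz, zero_mul, zero_add] at this
        exact this
      rw [hR'form] at hev
      simp only [Polynomial.map_add, Polynomial.map_mul, Polynomial.map_C, Polynomial.map_X,
        Polynomial.eval_add, Polynomial.eval_mul, Polynomial.eval_C, Polynomial.eval_X] at hev
      have him0 : (R'.coeff 1) * z.im = 0 := by
        have := congrArg Complex.im hev
        simpa [Complex.add_im, Complex.mul_im] using this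
      have hc1 : R'.coeff 1 = 0 := by
        rcases mul_eq_zero.mp him0 with h | h
        · exact h
        · exact absurd h him
      have hc0 : R'.coeff 0 = 0 := by
        rw [hc1] at hev
        simp only [map_zero, zero_mul, zero_add] at hev
        exact (map_eq_zero_iff _ (algebraMap ℝ ℂ).injective).mp hev
      have hR'0 : R' = 0 := by
        rw [hR'form, hc1, hc0]
        simp
      refine ⟨Nr /ₘ ψr, ?_⟩
      linear_combination hR'0 - hdm
    -- back in the quaternions
    obtain ⟨Mq, hMq⟩ := hdvd
    have hNNpsi : NN = (Mq.map (algebraMap ℝ Hq)) * chp p₀ := by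
      rw [hNNmap, hMq, Polynomial.map_mul, hψmap, chp_comm]
    obtain ⟨α, β, hL⟩ := meq_reduce p₀ F
    have hpcF : MEq p₀ (pc F) (C (star α) * X + C (star β)) := by
      have := meq_pc hL
      rw [pc_lin] at this
      exact this
    have hNN0 : MEq p₀ NN 0 := ⟨Mq.map (algebraMap ℝ Hq), by rw [hNNpsi, zero_add]⟩
    have hLL : MEq p₀ ((C α * X + C β) * (C (star α) * X + C (star β))) 0 :=
      meq_trans (meq_symm (meq_mul hL hpcF)) hNN0
    have hred := mulred p₀ α β (star α) (star β)
    have hlin0 : MEq p₀ (0 : Hq[X]) (C 0 * X + C 0) := meq_of_eq (by simp)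
    have heqs := meq_unique (meq_trans (meq_trans (meq_symm hred) hLL) hlin0)
    have hI : α * star α * ((2*p₀.re : ℝ) : Hq) + α * star β + β * star α = 0 := heqs.1
    have hII : β * star β - α * star α * ((normSq p₀ : ℝ) : Hq) = 0 := heqs.2
    by_cases hα : α = 0
    · -- then β = 0 and chp p₀ divides F
      have hβ : β = 0 := by
        rw [hα] at hII
        simp only [zero_mul, mul_zero, sub_zero] at hII
        have : ((normSq β : ℝ) : Hq) = 0 := by rw [← Quaternion.self_mul_star]; exact hII
        exact Quaternion.normSq_eq_zero.mp (q_coe_zero_iff.mp this)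
      have hF0 : MEq p₀ F 0 := by
        rw [hα, hβ] at hL
        refine meq_trans hL (meq_of_eq ?_)
        simp
      obtain ⟨E, hE⟩ := meq_zero_dvd hF0
      refine ⟨p₀, ?_⟩
      rw [hE]
      exact eval_mul_right_zero E (chp_eval_self p₀)
    · -- the root is p₁ = -(α⁻¹ * β)
      set p₁ : Hq := -(α⁻¹ * β) with hp₁
      have hnsqα : normSq α ≠ 0 := Quaternion.normSq_ne_zero.mpr hα
      -- normSq p₁ = normSq p₀
      have hnsqeq : normSq β = normSq α * normSq p₀ := by
        have h1 : β * star β = α * star α * ((normSq p₀ : ℝ) : Hq) := by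
          have := hII
          linear_combination (norm := noncomm_ring) this
        rw [Quaternion.self_mul_star, Quaternion.self_mul_star] at h1
        have : ((normSq β : ℝ) : Hq) = ((normSq α * normSq p₀ : ℝ) : Hq) := by
          rw [h1, ← Quaternion.coe_mul]
        exact Quaternion.coe_injective this
      have hnsqp₁ : normSq p₁ = normSq p₀ := by
        rw [hp₁, Quaternion.normSq_neg, map_mul, Quaternion.normSq_inv, hnsqeq]
        field_simp
      -- re p₁ = re p₀
      have hrestar : 2 * (α * star β).re = -(normSq α * (2*p₀.re)) := by
        have h1 : α * star β + β * star α = -(α * star α * ((2*p₀.re : ℝ) : Hq)) := by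
          linear_combination (norm := noncomm_ring) hI
        have h2 : β * star α = star (α * star β) := by
          rw [star_mul, star_star]
        rw [h2, Quaternion.self_add_star', Quaternion.self_mul_star] at h1
        have : ((2 * (α * star β).re : ℝ) : Hq) = ((-(normSq α * (2*p₀.re)) : ℝ) : Hq) := by
          rw [h1, ← Quaternion.coe_mul]
          push_cast
          ring
        exact Quaternion.coe_injective this
      have hinvα : α⁻¹ = ((((normSq α)⁻¹ : ℝ)) : Hq) * star α := by
        have h1 : star α * α = ((normSq α : ℝ) : Hq) := Quaternion.star_mul_self α
        have h2 : ((((normSq α)⁻¹ : ℝ)) : Hq) * star α * α = 1 := by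
          rw [mul_assoc, h1, ← Quaternion.coe_mul, inv_mul_cancel₀ hnsqα]
          rfl
        have h3 := congrArg (fun x : Hq => x * α⁻¹) h2
        rw [mul_assoc, mul_inv_cancel₀ hα, mul_one, one_mul] at h3
        exact h3.symm
      have hrep₁ : 2 * p₁.re = 2 * p₀.re := by
        rw [hp₁]
        have : (α⁻¹ * β).re = (normSq α)⁻¹ * ((star α * β).re) := by
          rw [hinvα, mul_assoc, q_coe_mul_re]
        rw [Quaternion.re_neg, this]
        have h3 : (star α * β).re = (α * star β).re := by
          rw [q_mul_re_comm]
          have : β * star α = star (α * star β) := by rw [star_mul, star_star]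
          rw [this, Quaternion.re_star]
        rw [h3]
        have h4 : (α * star β).re = -(normSq α * (2*p₀.re))/2 := by
          linarith [hrestar]
        rw [h4]
        field_simp
      -- now chp p₀ vanishes at p₁
      have hchp : (chp p₀).eval p₁ = 0 := by
        rw [chp_eval]
        have hchar := q_char p₁
        have h5 : p₁ * p₁ = ((2*p₁.re : ℝ) : Hq) * p₁ - ((normSq p₁ : ℝ) : Hq) := by
          linear_combination (norm := noncomm_ring) hchar
        rw [h5, hrep₁, hnsqp₁]
        noncomm_ring
      refine ⟨p₁, ?_⟩
      have := eval_of_meq_lin hchp hL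
      rw [this, hp₁]
      have : α * -(α⁻¹ * β) = -β := by
        rw [mul_neg, ← mul_assoc, mul_inv_cancel₀ hα, one_mul]
      rw [this]
      simp

end NSQ
namespace NSQ

open Quaternion

lemma two_lin_mul (u v : Hq) : (X - C u) * (X - C v) = X^2 - C (u + v) * X + C (u*v) := by
  have hexp : (X - C u) * (X - C v) =
      X*X - (C u + C v) * X + C u * C v := by
    rw [sub_mul, mul_sub, mul_sub, X_mul (p := C v), add_mul]
    abel
  rw [hexp, ← C_mul, ← C_add, ← sq]

lemma lin_mul_form (α v : Hq) : C α * (X - C v) = C α * X + C (-(α * v)) := by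
  rw [mul_sub, ← C_mul, sub_eq_add_neg, ← C_neg]

lemma xsubc (v : Hq) : X - C v = C 1 * X + C (-v) := by
  rw [C_1, one_mul, sub_eq_add_neg, ← C_neg]

/-- from the two "norm" equations, `-(a⁻¹*b)` lies on the class of `q` -/
lemma root_from_eqs (q : Hq) {a b : Hq} (ha : a ≠ 0)
    (hI : a * star a * ((2*q.re : ℝ) : Hq) + a * star b + b * star a = 0)
    (hII : b * star b - a * star a * ((normSq q : ℝ) : Hq) = 0) :
    (chp q).eval (-(a⁻¹ * b)) = 0 := by
  set w : Hq := -(a⁻¹ * b) with hw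
  have hnsqa : normSq a ≠ 0 := Quaternion.normSq_ne_zero.mpr ha
  have hnsqeq : normSq b = normSq a * normSq q := by
    have h1 : b * star b = a * star a * ((normSq q : ℝ) : Hq) := by
      linear_combination (norm := noncomm_ring) hII
    rw [Quaternion.self_mul_star, Quaternion.self_mul_star] at h1
    have : ((normSq b : ℝ) : Hq) = ((normSq a * normSq q : ℝ) : Hq) := by
      rw [h1, ← Quaternion.coe_mul]
    exact Quaternion.coe_injective this
  have hnsqw : normSq w = normSq q := by
    rw [hw, Quaternion.normSq_neg, map_mul, Quaternion.normSq_inv, hnsqeq]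
    field_simp
  have hrestar : 2 * (a * star b).re = -(normSq a * (2*q.re)) := by
    have h1 : a * star b + b * star a = -(a * star a * ((2*q.re : ℝ) : Hq)) := by
      linear_combination (norm := noncomm_ring) hI
    have h2 : b * star a = star (a * star b) := by
      rw [star_mul, star_star]
    rw [h2, Quaternion.self_add_star', Quaternion.self_mul_star] at h1
    have : ((2 * (a * star b).re : ℝ) : Hq) = ((-(normSq a * (2*q.re)) : ℝ) : Hq) := by
      rw [h1, ← Quaternion.coe_mul]
      push_cast
      ring
    exact Quaternion.coe_injective this
  have hinva : a⁻¹ = ((((normSq a)⁻¹ : ℝ)) : Hq) * star a := by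
    have h1 : star a * a = ((normSq a : ℝ) : Hq) := Quaternion.star_mul_self a
    have h2 : ((((normSq a)⁻¹ : ℝ)) : Hq) * star a * a = 1 := by
      rw [mul_assoc, h1, ← Quaternion.coe_mul, inv_mul_cancel₀ hnsqa]
      rfl
    have h3 := congrArg (fun x : Hq => x * a⁻¹) h2
    rw [mul_assoc, mul_inv_cancel₀ ha, mul_one, one_mul] at h3
    exact h3.symm
  have hrew : 2 * w.re = 2 * q.re := by
    rw [hw]
    have : (a⁻¹ * b).re = (normSq a)⁻¹ * ((star a * b).re) := by
      rw [hinva, mul_assoc, q_coe_mul_re]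
    rw [Quaternion.re_neg, this]
    have h3 : (star a * b).re = (a * star b).re := by
      rw [q_mul_re_comm]
      have : b * star a = star (a * star b) := by rw [star_mul, star_star]
      rw [this, Quaternion.re_star]
    rw [h3]
    have h4 : (a * star b).re = -(normSq a * (2*q.re))/2 := by
      linarith [hrestar]
    rw [h4]
    field_simp
  rw [chp_eval]
  have hchar := q_char w
  have h5 : w * w = ((2*w.re : ℝ) : Hq) * w - ((normSq w : ℝ) : Hq) := by
    linear_combination (norm := noncomm_ring) hchar
  rw [h5, hrew, hnsqw]
  noncomm_ring

set_option maxHeartbeats 1000000 in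
/-- THE KEY STEP: transfer of roots from `D₁` to the twisted polynomial `(X - C p) * G`. -/
theorem key_step (D₁ F₁ G : Hq[X]) (p q : Hq)
    (hinv : D₁ * ((X - C p) * G) = F₁ * D₁)
    (hq : D₁.eval q = 0)
    (hroots : ∀ v : Hq, (D₁ * (X - C p)).eval v = 0 → (G * (X - C p)).eval v = 0)
    (hnd : ¬ ∃ E, D₁ * (X - C p) = E * chp q) :
    ((X - C p) * G).eval q = 0 := by
  classical
  set sH : Hq := ((2*q.re : ℝ) : Hq) with hsH
  set nH : Hq := ((normSq q : ℝ) : Hq) with hnH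
  set Ft : Hq[X] := (X - C p) * G with hFtdef
  set D : Hq[X] := D₁ * (X - C p) with hDdef
  have hsHc : ∀ x : Hq, x * sH = sH * x := fun x => (Quaternion.coe_commutes _ x).symm
  have hnHc : ∀ x : Hq, x * nH = nH * x := fun x => (Quaternion.coe_commutes _ x).symm
  have hqq : q * q = sH * q - nH := by
    have h := q_char q
    rw [← hsH, ← hnH] at h
    linear_combination (norm := noncomm_ring) h
  -- linear representative of D₁
  obtain ⟨α₁, β₁, hD₁⟩ := meq_reduce q D₁
  have hβ₁ : α₁ * q + β₁ = 0 := by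
    rw [← eval_of_meq_lin (chp_eval_self q) hD₁]
    exact hq
  have hβ₁' : β₁ = -(α₁ * q) := by linear_combination (norm := noncomm_ring) hβ₁
  have hD₁' : MEq q D₁ (C α₁ * (X - C q)) := by
    rw [lin_mul_form, ← hβ₁']
    exact hD₁
  have hα₁ : α₁ ≠ 0 := by
    intro h0
    apply hnd
    have hz : MEq q D₁ 0 := by
      refine meq_trans hD₁' (meq_of_eq ?_)
      rw [h0, map_zero, zero_mul]
    have hz2 : MEq q D 0 := by
      refine meq_trans (meq_mul hz (meq_refl q (X - C p))) (meq_of_eq ?_)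
      rw [zero_mul]
    exact meq_zero_dvd hz2
  by_cases hp : (chp q).eval p = 0
  · -- CASE 1 : p lies on the class of q
    have hpp : p * p = sH * p - nH := by
      have h := chp_eval q p
      rw [hp, ← hsH, ← hnH] at h
      linear_combination (norm := noncomm_ring) h.symm
    have hfac : (X - C (sH - p)) * (X - C p) = chp q := by
      rw [two_lin_mul]
      have h1 : sH - p + p = sH := by abel
      have h2 : (sH - p) * p = nH := by
        have h3 : (sH - p) * p = sH * p - p * p := by noncomm_ring
        rw [h3, hpp]
        abel
      rw [h1, h2]
      unfold chp
      rw [← hsH, ← hnH]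
    obtain ⟨at', bt, hFtr⟩ := meq_reduce q Ft
    have hstepA : MEq q ((X - C (sH - p)) * Ft) 0 := by
      refine ⟨G, ?_⟩
      rw [zero_add, hFtdef, ← mul_assoc, hfac, chp_comm]
    have hA0 : MEq q ((C 1 * X + C (-(sH - p))) * (C at' * X + C bt)) (C 0 * X + C 0) := by
      refine meq_trans (meq_symm (meq_mul (meq_of_eq (xsubc (sH - p))) hFtr)) ?_
      exact meq_trans hstepA (meq_of_eq (show (0:Hq[X]) = C 0 * X + C 0 by simp))
    have heqA := meq_unique (meq_trans (meq_symm (mulred q 1 (-(sH - p)) at' bt)) hA0)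
    have h1A := heqA.1
    rw [← hsH] at h1A
    have hbt : bt = -(p * at') := by
      have e2 : at' * sH = sH * at' := hsHc at'
      have h2 : bt + p * at' = 0 := by
        calc bt + p * at'
            = (1*at'*sH + 1*bt + (-(sH - p))*at') - (at'*sH - sH*at') := by noncomm_ring
          _ = 0 - (at'*sH - sH*at') := by rw [h1A]
          _ = 0 := by rw [e2]; abel
      linear_combination (norm := noncomm_ring) h2
    -- invariance reduced mod chp q
    obtain ⟨γ, δ, hEr⟩ := meq_reduce q (C α₁⁻¹ * (F₁ * C α₁))
    have hrel : MEq q ((X - C q) * Ft) ((C α₁⁻¹ * (F₁ * C α₁)) * (X - C q)) := by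
      have h1 : MEq q (D₁ * Ft) ((C α₁ * (X - C q)) * Ft) := meq_mul hD₁' (meq_refl q Ft)
      have h2 : MEq q (F₁ * D₁) (F₁ * (C α₁ * (X - C q))) := meq_mul (meq_refl q F₁) hD₁'
      have h3 : MEq q ((C α₁ * (X - C q)) * Ft) (F₁ * (C α₁ * (X - C q))) :=
        meq_trans (meq_symm h1) (meq_trans (meq_of_eq hinv) h2)
      have h4 : MEq q (C α₁⁻¹ * ((C α₁ * (X - C q)) * Ft))
          (C α₁⁻¹ * (F₁ * (C α₁ * (X - C q)))) := meq_mul (meq_refl q _) h3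
      have h5 : C α₁⁻¹ * ((C α₁ * (X - C q)) * Ft) = (X - C q) * Ft := by
        rw [show C α₁⁻¹ * ((C α₁ * (X - C q)) * Ft)
            = (C α₁⁻¹ * C α₁) * ((X - C q) * Ft) by noncomm_ring,
          ← C_mul, inv_mul_cancel₀ hα₁, C_1, one_mul]
      have h6 : C α₁⁻¹ * (F₁ * (C α₁ * (X - C q))) = (C α₁⁻¹ * (F₁ * C α₁)) * (X - C q) := by
        noncomm_ring
      rw [h5, h6] at h4
      exact h4
    have hFtr' : MEq q Ft (C at' * X + C (-(p * at'))) := by rw [← hbt]; exact hFtr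
    have hlhs : MEq q ((X - C q) * Ft)
        (C (1*at'*sH + 1*(-(p * at')) + (-q)*at') * X + C ((-q)*(-(p * at')) - 1*at'*nH)) := by
      refine meq_trans (meq_mul (meq_of_eq (xsubc q)) hFtr') ?_
      have := mulred q 1 (-q) at' (-(p * at'))
      rw [← hsH, ← hnH] at this
      exact this
    have hrhs : MEq q ((C α₁⁻¹ * (F₁ * C α₁)) * (X - C q))
        (C (γ*1*sH + γ*(-q) + δ*1) * X + C (δ*(-q) - γ*1*nH)) := by
      refine meq_trans (meq_mul hEr (meq_of_eq (xsubc q))) ?_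
      have := mulred q γ δ 1 (-q)
      rw [← hsH, ← hnH] at this
      exact this
    have heqB := meq_unique (meq_trans (meq_symm hlhs) (meq_trans hrel hrhs))
    have hx := heqB.1
    have hy := heqB.2
    set u : Hq := sH - q - p with hu
    have hune : u ≠ 0 := by
      intro h0
      apply hnd
      have hpq : p = sH - q := by
        have h9 : sH - q - p = 0 := h0
        linear_combination (norm := noncomm_ring) -h9
      have hstar : star q = sH - q := by
        rw [hsH]
        exact Quaternion.star_eq_two_re_sub q
      have hfacq : (X - C q) * (X - C p) = chp q := by
        rw [hpq, ← hstar, ← chp_factor]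
      have hz2 : MEq q D 0 := by
        refine meq_trans (meq_mul hD₁' (meq_refl q (X - C p))) ?_
        refine ⟨C α₁, ?_⟩
        rw [zero_add, mul_assoc, hfacq]
      exact meq_zero_dvd hz2
    -- scalar computations
    have e4 : (γ*1*sH + γ*(-q) + δ*1) * q = γ*nH + δ*q := by
      have h9 : γ*(q*q) = γ*(sH*q) - γ*nH := by rw [hqq]; noncomm_ring
      calc (γ*1*sH + γ*(-q) + δ*1) * q = γ*(sH*q) - γ*(q*q) + δ*q := by noncomm_ring
        _ = γ*(sH*q) - (γ*(sH*q) - γ*nH) + δ*q := by rw [h9]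
        _ = γ*nH + δ*q := by abel
    have hxq : at'*sH*q - p*at'*q - q*at'*q = γ*nH + δ*q := by
      have h9 := congrArg (fun x : Hq => x * q) hx
      calc at'*sH*q - p*at'*q - q*at'*q
          = (1*at'*sH + 1*(-(p * at')) + (-q)*at') * q := by noncomm_ring
        _ = (γ*1*sH + γ*(-q) + δ*1) * q := h9
        _ = γ*nH + δ*q := e4
    have hyy : q*(p*at') - at'*nH = -(δ*q) - γ*nH := by
      calc q*(p*at') - at'*nH = (-q)*(-(p * at')) - 1*at'*nH := by noncomm_ring
        _ = δ*(-q) - γ*1*nH := hy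
        _ = -(δ*q) - γ*nH := by noncomm_ring
    have e2 : at' * sH = sH * at' := hsHc at'
    have e3 : at' * nH = nH * at' := hnHc at'
    have e5 : p*(p*at') = sH*(p*at') - nH*at' := by
      calc p*(p*at') = (p*p)*at' := by noncomm_ring
        _ = (sH*p - nH)*at' := by rw [hpp]
        _ = sH*(p*at') - nH*at' := by noncomm_ring
    have hS : u * (p*at' - at'*q) = 0 := by
      calc u * (p*at' - at'*q)
          = (sH*(p*at') - q*(p*at') - p*(p*at'))
            - (sH*(at'*q) - q*(at'*q) - p*(at'*q)) := by rw [hu]; noncomm_ring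
        _ = (sH*(p*at') - q*(p*at') - (sH*(p*at') - nH*at'))
            - (sH*(at'*q) - q*(at'*q) - p*(at'*q)) := by rw [e5]
        _ = -(q*(p*at') - at'*nH) - (at'*sH*q - p*at'*q - q*at'*q)
            + (at'*sH*q - sH*(at'*q)) + (nH*at' - at'*nH) := by noncomm_ring
        _ = -(-(δ*q) - γ*nH) - (γ*nH + δ*q)
            + (at'*sH*q - sH*(at'*q)) + (nH*at' - at'*nH) := by rw [hyy, hxq]
        _ = (at'*sH*q - sH*(at'*q)) + (nH*at' - at'*nH) := by abel
        _ = 0 := by rw [e2, ← e3, mul_assoc]; abel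
    have hzero : p*at' - at'*q = 0 := by
      rcases mul_eq_zero.mp hS with h | h
      · exact absurd h hune
      · exact h
    have hev := eval_of_meq_lin (chp_eval_self q) hFtr'
    rw [hev]
    linear_combination (norm := noncomm_ring) -hzero
  · -- CASE 2 : p is not on the class of q
    set w0 : Hq := (chp q).eval p with hw0
    have hw0ne : w0 ≠ 0 := hp
    set U' : Hq[X] := (X + C (p - sH)) * C (-(w0⁻¹)) with hU'
    have hid : (X - C p) * (X + C (p - sH)) = chp q - C w0 := by
      have h1 : (X + C (p - sH)) = X - C (sH - p) := by
        rw [show p - sH = -(sH - p) by abel, C_neg, sub_eq_add_neg]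
        abel
      rw [h1, two_lin_mul]
      have h2 : p + (sH - p) = sH := by abel
      have h3 : p * (sH - p) = nH - w0 := by
        have h4 : p * (sH - p) = p * sH - p * p := by noncomm_ring
        have h5 := chp_eval q p
        rw [← hsH, ← hnH, ← hw0] at h5
        rw [h4, hsHc p]
        linear_combination (norm := noncomm_ring) h5
      rw [h2, h3]
      unfold chp
      rw [← hsH, ← hnH, C_sub]
      abel
    have hw0inv : w0 * (-(w0⁻¹)) = -1 := by rw [mul_neg, mul_inv_cancel₀ hw0ne]
    have huU' : MEq q ((X - C p) * U') 1 := by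
      refine ⟨C (-(w0⁻¹)), ?_⟩
      rw [hU', ← mul_assoc, hid, sub_mul, chp_comm q (C (-(w0⁻¹))), ← C_mul, hw0inv]
      simp only [C_neg, C_1]
      abel
    -- D * pc D ≡ 0
    have hpcD1 : MEq q (pc D₁) ((X - C (star q)) * C (star α₁)) := by
      have h9 := meq_pc hD₁'
      rw [pc_mul, pc_sub, pc_X, pc_C, pc_C] at h9
      exact h9
    have hDpcD : MEq q (D₁ * pc D₁) 0 := by
      refine meq_trans (meq_mul hD₁' hpcD1) ?_
      refine ⟨C α₁ * C (star α₁), ?_⟩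
      rw [zero_add]
      have hfq : (X - C q) * (X - C (star q)) = chp q := (chp_factor q).symm
      calc (C α₁ * (X - C q)) * ((X - C (star q)) * C (star α₁))
          = C α₁ * ((X - C q) * (X - C (star q))) * C (star α₁) := by noncomm_ring
        _ = C α₁ * chp q * C (star α₁) := by rw [hfq]
        _ = C α₁ * C (star α₁) * chp q := by
            rw [mul_assoc, chp_comm q (C (star α₁)), mul_assoc]
    have hDDc : MEq q (D * pc D) 0 := by
      have hpcDform : pc D = (X - C (star p)) * pc D₁ := by
        rw [hDdef, pc_mul, pc_sub, pc_X, pc_C]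
      have hDD : D * pc D = chp p * (D₁ * pc D₁) := by
        rw [hDdef]  -- note : pc D already rewritten?
        rw [hpcDform]
        have hfp : (X - C p) * (X - C (star p)) = chp p := (chp_factor p).symm
        calc (D₁ * (X - C p)) * ((X - C (star p)) * pc D₁)
            = D₁ * ((X - C p) * (X - C (star p))) * pc D₁ := by noncomm_ring
          _ = D₁ * chp p * pc D₁ := by rw [hfp]
          _ = chp p * (D₁ * pc D₁) := by rw [← chp_comm p D₁]; noncomm_ring
      rw [hDD]
      exact meq_trans (meq_mul (meq_refl q (chp p)) hDpcD) (meq_of_eq (by rw [mul_zero]))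
    -- reduce D
    obtain ⟨a, b, hDr⟩ := meq_reduce q D
    have hpcDr : MEq q (pc D) (C (star a) * X + C (star b)) := by
      have h9 := meq_pc hDr
      rw [pc_lin] at h9
      exact h9
    have heqs := meq_unique (meq_trans (meq_symm (mulred q a b (star a) (star b)))
      (meq_trans (meq_symm (meq_mul hDr hpcDr))
        (meq_trans hDDc (meq_of_eq (show (0:Hq[X]) = C 0 * X + C 0 by simp)))))
    have hI := heqs.1
    have hII := heqs.2
    have ha : a ≠ 0 := by
      intro h0
      apply hnd
      have hb0 : b = 0 := by
        rw [h0] at hII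
        simp only [zero_mul, mul_zero, sub_zero] at hII
        have h9 : ((normSq b : ℝ) : Hq) = 0 := by
          rw [← Quaternion.self_mul_star]; exact hII
        exact Quaternion.normSq_eq_zero.mp (q_coe_zero_iff.mp h9)
      have hz2 : MEq q D 0 := by
        refine meq_trans hDr (meq_of_eq ?_)
        rw [h0, hb0]
        simp
      exact meq_zero_dvd hz2
    set w : Hq := -(a⁻¹ * b) with hwdef
    have hwchp : (chp q).eval w = 0 := root_from_eqs q ha hI hII
    have hawb : a * w + b = 0 := by
      rw [hwdef, mul_neg, ← mul_assoc, mul_inv_cancel₀ ha, one_mul]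
      abel
    have hDw : D.eval w = 0 := by
      rw [eval_of_meq_lin hwchp hDr]
      exact hawb
    have hFw : (G * (X - C p)).eval w = 0 := hroots w hDw
    obtain ⟨af, bf, hFr⟩ := meq_reduce q (G * (X - C p))
    have hbf : af * w + bf = 0 := by
      rw [← eval_of_meq_lin hwchp hFr]
      exact hFw
    have hbf' : bf = -(af * w) := by linear_combination (norm := noncomm_ring) hbf
    have hb' : b = -(a * w) := by linear_combination (norm := noncomm_ring) hawb
    have hFlin : MEq q (G * (X - C p)) (C af * (X - C w)) := by
      rw [lin_mul_form, ← hbf']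
      exact hFr
    have hDlin : MEq q D (C a * (X - C w)) := by
      rw [lin_mul_form, ← hb']
      exact hDr
    have hXw : MEq q (X - C w) (C a⁻¹ * D) := by
      refine meq_symm (meq_trans (meq_mul (meq_refl q (C a⁻¹)) hDlin) (meq_of_eq ?_))
      rw [← mul_assoc, ← C_mul, inv_mul_cancel₀ ha, C_1, one_mul]
    have hc1 : MEq q Ft (((X - C p) * (G * (X - C p))) * U') := by
      refine meq_trans (meq_of_eq (mul_one Ft).symm) ?_
      refine meq_trans (meq_mul (meq_refl q Ft) (meq_symm huU')) (meq_of_eq ?_)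
      rw [hFtdef]
      noncomm_ring
    have hc2 : MEq q (((X - C p) * (G * (X - C p))) * U')
        (((X - C p) * (C af * (C a⁻¹ * D))) * U') :=
      meq_mul (meq_mul (meq_refl q (X - C p))
        (meq_trans hFlin (meq_mul (meq_refl q (C af)) hXw))) (meq_refl q U')
    have hc3 : MEq q (((X - C p) * (C af * (C a⁻¹ * D))) * U')
        ((((X - C p) * C (af * a⁻¹ * α₁)) * (X - C q)) * ((X - C p) * U')) := by
      refine meq_trans (meq_mul (meq_mul (meq_refl q (X - C p))
        (meq_mul (meq_refl q (C af)) (meq_mul (meq_refl q (C a⁻¹))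
          (meq_mul hD₁' (meq_refl q (X - C p)))))) (meq_refl q U')) (meq_of_eq ?_)
      rw [C_mul, C_mul]
      noncomm_ring
    have hc4 : MEq q ((((X - C p) * C (af * a⁻¹ * α₁)) * (X - C q)) * ((X - C p) * U'))
        (((X - C p) * C (af * a⁻¹ * α₁)) * (X - C q)) :=
      meq_trans (meq_mul (meq_refl q _) huU') (meq_of_eq (mul_one _))
    have hfin : MEq q Ft (((X - C p) * C (af * a⁻¹ * α₁)) * (X - C q)) :=
      meq_trans hc1 (meq_trans hc2 (meq_trans hc3 hc4))
    exact eval_of_meq_linfac (chp_eval_self q) hfin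

end NSQ
namespace NSQ

open Quaternion

lemma pow_mul_shift (a b : Hq[X]) (n : ℕ) : (a*b)^(n+1) = a * (b*a)^n * b := by
  induction n with
  | zero => simp [pow_succ]
  | succ n ih =>
      rw [pow_succ, ih, pow_succ]
      noncomm_ring

set_option maxHeartbeats 1000000 in
/-- the core induction: if `(D)` is `F`-invariant and every root of `D` is a root of `F`,
then some power of `F` is right-divisible by `D`. -/
theorem KS : ∀ d : ℕ, ∀ D F F₁ : Hq[X], D.Monic → D.natDegree = d → D * F = F₁ * D →
    (∀ v, D.eval v = 0 → F.eval v = 0) → ∃ N Q, 1 ≤ N ∧ F ^ N = Q * D := by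
  intro d
  induction d using Nat.strong_induction_on with
  | _ d ih =>
  intro D F F₁ hmon hdeg hinv hroots
  rcases Nat.eq_zero_or_pos d with hd0 | hdpos
  · have hD1 : D = 1 := hmon.natDegree_eq_zero.mp (by omega)
    exact ⟨1, F, le_refl 1, by rw [hD1, pow_one, mul_one]⟩
  by_cases hre : ∃ r : ℝ, D.eval ((r:Hq)) = 0
  · obtain ⟨r, hr⟩ := hre
    have hFr : F.eval ((r:Hq)) = 0 := hroots _ hr
    obtain ⟨D₂, hD₂⟩ := factor_theorem.mp hr
    obtain ⟨F₂, hF₂⟩ := factor_theorem.mp hFr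
    have hcen : ∀ P : Hq[X], (X - C ((r:Hq))) * P = P * (X - C ((r:Hq))) := by
      intro P
      have h1 : Commute (X : Hq[X]) P := X_mul
      have h2 : Commute (C ((r:Hq))) P := Creal_comm r P
      exact (h1.sub_left h2).eq
    have hXrne : (X - C ((r:Hq))) ≠ 0 := X_sub_C_ne_zero _
    have hmon₂ : D₂.Monic := by
      have h9 : (D₂ * (X - C ((r:Hq)))).Monic := by rw [← hD₂]; exact hmon
      exact (monic_X_sub_C _).of_mul_monic_right h9
    have hD₂ne : D₂ ≠ 0 := hmon₂.ne_zero
    have hD₂deg : D₂.natDegree = d - 1 := by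
      have h9 : D.natDegree = D₂.natDegree + 1 := by
        rw [hD₂, Polynomial.natDegree_mul hD₂ne hXrne, natDegree_X_sub_C]
      omega
    have hinv₂ : D₂ * F = F₁ * D₂ := by
      apply mul_right_cancel₀ hXrne
      have h8 : D * F = (D₂ * F) * (X - C ((r:Hq))) := by
        rw [hD₂, mul_assoc, hcen F, ← mul_assoc]
      have h7 : F₁ * D = (F₁ * D₂) * (X - C ((r:Hq))) := by
        rw [hD₂, ← mul_assoc]
      rw [← h8, ← h7]
      exact hinv
    have hroots₂ : ∀ v, D₂.eval v = 0 → F.eval v = 0 := by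
      intro v hv
      apply hroots
      have h9 : D = (X - C ((r:Hq))) * D₂ := by rw [hD₂, ← hcen]
      rw [h9]
      exact eval_mul_right_zero _ hv
    obtain ⟨N, Q, hN1, hNQ⟩ := ih (d-1) (by omega) D₂ F F₁ hmon₂ hD₂deg hinv₂ hroots₂
    refine ⟨N+1, F₂ * Q, by omega, ?_⟩
    calc F^(N+1) = F * F^N := by rw [pow_succ']
      _ = F₂ * (X - C ((r:Hq))) * (Q * D₂) := by rw [hNQ, hF₂]
      _ = F₂ * (Q * D₂) * (X - C ((r:Hq))) := by
          rw [mul_assoc F₂, hcen (Q * D₂), ← mul_assoc]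
      _ = (F₂ * Q) * D := by rw [hD₂]; noncomm_ring
  by_cases hquad : ∃ v : Hq, (∃ E, D = E * chp v) ∧ (∃ E', F = E' * chp v)
  · obtain ⟨v, ⟨E, hE⟩, ⟨E', hE'⟩⟩ := hquad
    have hEmon : E.Monic := by
      have h9 : (E * chp v).Monic := by rw [← hE]; exact hmon
      exact (chp_monic v).of_mul_monic_right h9
    have hEne : E ≠ 0 := hEmon.ne_zero
    have hEdeg : E.natDegree = d - 2 := by
      have h9 : D.natDegree = E.natDegree + 2 := by
        rw [hE, Polynomial.natDegree_mul hEne (chp_ne_zero v), chp_natDegree]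
      -- note : d ≥ 2 here since chp has degree 2
      omega
    have hinvE : E * F = F₁ * E := by
      apply mul_right_cancel₀ (chp_ne_zero v)
      have h8 : D * F = (E * F) * chp v := by
        rw [hE, mul_assoc, chp_comm v F, ← mul_assoc]
      have h7 : F₁ * D = (F₁ * E) * chp v := by rw [hE, ← mul_assoc]
      rw [← h8, ← h7]
      exact hinv
    have hrootsE : ∀ w, E.eval w = 0 → F.eval w = 0 := by
      intro w hw
      apply hroots
      have h9 : D = chp v * E := by rw [hE, chp_comm]
      rw [h9]
      exact eval_mul_right_zero _ hw
    have hd2 : d - 2 < d := by omega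
    obtain ⟨N, Q, hN1, hNQ⟩ := ih (d-2) hd2 E F F₁ hEmon hEdeg hinvE hrootsE
    refine ⟨N+1, E' * Q, by omega, ?_⟩
    calc F^(N+1) = F * F^N := by rw [pow_succ']
      _ = E' * chp v * (Q * E) := by rw [hNQ, hE']
      _ = E' * (Q * E) * chp v := by
          rw [mul_assoc E', chp_comm v (Q * E), ← mul_assoc]
      _ = (E' * Q) * D := by rw [hE]; noncomm_ring
  · -- main branch : peel a (nonreal) root of D
    have hDdegpos : 0 < D.natDegree := by omega
    obtain ⟨p, hproot⟩ := niven D hDdegpos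
    have hFp : F.eval p = 0 := hroots p hproot
    obtain ⟨D₁, hD₁⟩ := factor_theorem.mp hproot
    obtain ⟨G, hG⟩ := factor_theorem.mp hFp
    have hXp_ne : (X - C p) ≠ 0 := X_sub_C_ne_zero _
    have hD₁mon : D₁.Monic := by
      have h9 : (D₁ * (X - C p)).Monic := by rw [← hD₁]; exact hmon
      exact (monic_X_sub_C _).of_mul_monic_right h9
    have hD₁deg : D₁.natDegree = d - 1 := by
      have h9 : D.natDegree = D₁.natDegree + 1 := by
        rw [hD₁, Polynomial.natDegree_mul hD₁mon.ne_zero hXp_ne, natDegree_X_sub_C]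
      omega
    have hinv₁ : D₁ * ((X - C p) * G) = F₁ * D₁ := by
      apply mul_right_cancel₀ hXp_ne
      have h8 : (D₁ * ((X - C p) * G)) * (X - C p) = D * F := by
        rw [hD₁, hG]
        noncomm_ring
      have h7 : (F₁ * D₁) * (X - C p) = F₁ * D := by rw [hD₁, ← mul_assoc]
      rw [h8, h7]
      exact hinv
    have hroots₁ : ∀ w, D₁.eval w = 0 → ((X - C p) * G).eval w = 0 := by
      intro w hw
      apply key_step D₁ F₁ G p w hinv₁ hw
      · intro u hu
        have h9 : D.eval u = 0 := by rw [hD₁]; exact hu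
        have := hroots u h9
        rw [hG] at this
        exact this
      · rintro ⟨E, hEw⟩
        rw [← hD₁] at hEw
        by_cases hwre : w = ((w.re:ℝ):Hq)
        · apply hre
          refine ⟨w.re, ?_⟩
          rw [hEw]
          apply eval_mul_right_zero
          rw [← hwre]
          exact chp_eval_self w
        · apply hquad
          refine ⟨w, ⟨E, hEw⟩, ?_⟩
          have hwD : D.eval w = 0 := by
            rw [hEw]; exact eval_mul_right_zero E (chp_eval_self w)
          have hwD' : D.eval (star w) = 0 := by
            rw [hEw]; exact eval_mul_right_zero E (chp_eval_star w)
          have hFw := hroots w hwD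
          have hFw' := hroots (star w) hwD'
          obtain ⟨af, bf, hFr⟩ := meq_reduce w F
          have h1 : af * w + bf = 0 := by
            rw [← eval_of_meq_lin (chp_eval_self w) hFr]; exact hFw
          have h2 : af * star w + bf = 0 := by
            rw [← eval_of_meq_lin (chp_eval_star w) hFr]; exact hFw'
          have hws : w - star w ≠ 0 := by
            intro h0
            apply hwre
            have h3 : star w = w := by linear_combination (norm := noncomm_ring) -h0
            exact Quaternion.star_eq_self.mp h3
          have haf : af = 0 := by
            have h3 : af * (w - star w) = 0 := by
              linear_combination (norm := noncomm_ring) h1 - h2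
            rcases mul_eq_zero.mp h3 with h | h
            · exact h
            · exact absurd h hws
          have hbf : bf = 0 := by
            rw [haf] at h1
            simpa using h1
          have h4 : MEq w F 0 := by
            rw [haf, hbf] at hFr
            exact meq_trans hFr (meq_of_eq (by simp))
          exact meq_zero_dvd h4
    obtain ⟨N, Q, hN1, hNQ⟩ := ih (d-1) (by omega) D₁ ((X - C p) * G) F₁ hD₁mon hD₁deg
      hinv₁ hroots₁
    refine ⟨N+1, G * Q, by omega, ?_⟩
    calc F^(N+1) = G * ((X - C p) * G)^N * (X - C p) := by
          rw [hG]; exact pow_mul_shift G (X - C p) N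
      _ = G * (Q * D₁) * (X - C p) := by rw [hNQ]
      _ = (G * Q) * D := by rw [hD₁]; noncomm_ring

end NSQ
namespace NSQ

open Quaternion

set_option maxHeartbeats 1000000 in
/-- the main lemma : if `F'` vanishes on the vanishing locus of the left ideal `I`,
then a power of `F'` lies in `I + I•F' + ... + I•F'^N`. -/
theorem ML (I : Ideal Hq[X]) (F' : Hq[X])
    (hvan : ∀ p : Hq, (∀ G ∈ I, G.eval p = 0) → F'.eval p = 0) :
    ∃ N : ℕ, 1 ≤ N ∧ ∃ G : Fin (N+1) → Hq[X], (∀ m, G m ∈ I) ∧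
      F' ^ N = ∑ m : Fin (N+1), G m * F' ^ (m : ℕ) := by
  classical
  let T : ℕ → Ideal Hq[X] := fun M =>
    { carrier := {g | ∃ c : ℕ → Hq[X], (∀ k, c k ∈ I) ∧
        g = ∑ k ∈ Finset.range (M+1), c k * F'^k}
      add_mem' := by
        rintro g₁ g₂ ⟨c₁, hc₁, rfl⟩ ⟨c₂, hc₂, rfl⟩
        refine ⟨c₁ + c₂, fun k => I.add_mem (hc₁ k) (hc₂ k), ?_⟩
        rw [← Finset.sum_add_distrib]
        exact Finset.sum_congr rfl fun k _ => by simp [add_mul]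
      zero_mem' := ⟨0, fun k => I.zero_mem, by simp⟩
      smul_mem' := by
        intro aa g hg
        obtain ⟨c, hc, rfl⟩ := hg
        refine ⟨fun k => aa * c k, fun k => I.mul_mem_left aa (hc k), ?_⟩
        rw [smul_eq_mul, Finset.mul_sum]
        exact Finset.sum_congr rfl fun k _ => (mul_assoc aa (c k) (F'^k)).symm }
  have hmemT : ∀ M g, g ∈ T M ↔ ∃ c : ℕ → Hq[X], (∀ k, c k ∈ I) ∧
      g = ∑ k ∈ Finset.range (M+1), c k * F'^k := fun M g => Iff.rfl
  have hTmono : Monotone T := by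
    apply monotone_nat_of_le_succ
    intro M g hg
    obtain ⟨c, hc, rfl⟩ := hg
    refine ⟨fun k => if k = M+1 then 0 else c k,
      fun k => by dsimp only; split
                  · exact I.zero_mem
                  · exact hc k, ?_⟩
    conv_rhs => rw [Finset.sum_range_succ]
    dsimp only
    rw [if_pos rfl, zero_mul, add_zero]
    refine Finset.sum_congr rfl fun k hk => ?_
    have h9 : k ≠ M+1 := by
      have := Finset.mem_range.mp hk
      omega
    rw [if_neg h9]
  have hTF : ∀ M g, g ∈ T M → g * F' ∈ T (M+1) := by
    intro M g hg
    obtain ⟨c, hc, rfl⟩ := hg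
    refine ⟨fun k => if k = 0 then 0 else c (k-1),
      fun k => by dsimp only; split
                  · exact I.zero_mem
                  · exact hc _, ?_⟩
    rw [Finset.sum_mul]
    conv_rhs => rw [Finset.sum_range_succ']
    dsimp only
    rw [if_pos rfl, zero_mul, add_zero]
    refine Finset.sum_congr rfl fun k _ => ?_
    have h9 : k + 1 ≠ 0 := by omega
    rw [if_neg h9]
    simp only [Nat.add_sub_cancel]
    rw [mul_assoc, ← pow_succ]
  set J := ⨆ M, T M with hJ
  have hdir : Directed (· ≤ ·) T := hTmono.directed_le
  have hIT0 : ∀ G ∈ I, G ∈ T 0 := by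
    intro G hG
    exact ⟨fun _ => G, fun _ => hG, by simp⟩
  obtain ⟨D, hDopt, hDiff⟩ := ideal_principal J
  have hDJ : D ∈ J := (hDiff D).mpr ⟨1, (one_mul D).symm⟩
  have hGJ : ∀ G ∈ I, G ∈ J := by
    intro G hG
    exact (le_iSup T 0) (hIT0 G hG)
  rcases hDopt with hD0 | hDmon
  · -- J = 0 : then F' vanishes identically
    have hF'0 : F' = 0 := by
      apply eval_all_zero
      intro pp
      apply hvan pp
      intro G hG
      obtain ⟨Q, hQ⟩ := (hDiff G).mp (hGJ G hG)
      rw [hQ, hD0, mul_zero, Polynomial.eval_zero]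
    refine ⟨1, le_refl 1, fun _ => 0, fun _ => I.zero_mem, ?_⟩
    rw [hF'0]
    simp
  · -- D monic : apply the core induction
    have hDFJ : D * F' ∈ J := by
      obtain ⟨M₁, hM₁⟩ := (Submodule.mem_iSup_of_directed T hdir).mp hDJ
      exact (le_iSup T (M₁+1)) (hTF M₁ D hM₁)
    obtain ⟨F₁, hF₁⟩ := (hDiff (D * F')).mp hDFJ
    have hroots : ∀ v, D.eval v = 0 → F'.eval v = 0 := by
      intro v hv
      apply hvan v
      intro G hG
      obtain ⟨Q, hQ⟩ := (hDiff G).mp (hGJ G hG)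
      rw [hQ]
      exact eval_mul_right_zero Q hv
    obtain ⟨N₁, Q, hN₁, hNQ⟩ := KS D.natDegree D F' F₁ hDmon rfl hF₁ hroots
    obtain ⟨M₀, hM₀⟩ := (Submodule.mem_iSup_of_directed T hdir).mp hDJ
    set N := max N₁ (max 1 M₀) with hN
    have hNN₁ : N₁ ≤ N := le_max_left _ _
    have hNM₀ : M₀ ≤ N := le_trans (le_max_right 1 M₀) (le_max_right _ _)
    have hN1 : 1 ≤ N := le_trans (le_max_left 1 M₀) (le_max_right _ _)
    have hFNmem : F'^N ∈ T M₀ := by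
      have h9 : F'^N = (F'^(N-N₁) * Q) * D := by
        rw [mul_assoc, ← hNQ, ← pow_add]
        congr 1
        omega
      rw [h9]
      exact (T M₀).mul_mem_left _ hM₀
    have hFN : F'^N ∈ T N := hTmono hNM₀ hFNmem
    obtain ⟨c, hcI, hcsum⟩ := hFN
    refine ⟨N, hN1, fun m => c m, fun m => hcI m, ?_⟩
    rw [hcsum]
    exact (Fin.sum_univ_eq_sum_range (fun k => c k * F'^k) (N+1)).symm

end NSQ

open Quaternion

theorem nullstellensatz_quaternions (I : Ideal (Polynomial (Quaternion ℝ)))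
    (F : Polynomial (Quaternion ℝ)) :
    (∀ p : Quaternion ℝ, (∀ G ∈ I, G.eval p = 0) → F.eval p = 0) ↔
    (∀ a : Quaternion ℝ, ∃ N : ℕ, 1 ≤ N ∧
      ∃ G : Fin (N + 1) → Polynomial (Quaternion ℝ), (∀ m, G m ∈ I) ∧
        (C a * F) ^ N = ∑ m : Fin (N + 1), G m * (C a * F) ^ (m : ℕ)) := by
  constructor
  · intro hvan a
    have hvan' : ∀ p : Quaternion ℝ, (∀ G ∈ I, G.eval p = 0) → (C a * F).eval p = 0 := by
      intro p hp
      rw [eval_C_mul, hvan p hp, mul_zero]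
    obtain ⟨N, hN, G, hGI, hsum⟩ := NSQ.ML I (C a * F) hvan'
    exact ⟨N, hN, G, hGI, hsum⟩
  · intro hpow p hp
    set a := star (F.eval p) with ha
    obtain ⟨N, hN1, G, hGI, hsum⟩ := hpow a
    set F' := C a * F with hF'
    have hr : F'.eval p = ((normSq (F.eval p) : ℝ) : Quaternion ℝ) := by
      rw [hF', eval_C_mul, ha, Quaternion.star_mul_self]
    have hcomm : Commute (F'.eval p) p := by
      rw [hr]; exact Quaternion.coe_commute _ p
    have hpowk : ∀ k : ℕ,
        (F'^(k+1)).eval p = ((normSq (F.eval p) : ℝ) : Quaternion ℝ)^(k+1) := by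
      intro k
      induction k with
      | zero => simpa using hr
      | succ k ihk =>
          have h9 : F'^(k+1+1) = F'^(k+1) * F' := by rw [pow_succ]
          rw [h9, NSQ.eval_mul_comm _ hcomm, ihk, hr, ← pow_succ]
    have hLHS : (F'^N).eval p = ((normSq (F.eval p) : ℝ) : Quaternion ℝ)^N := by
      obtain ⟨k, rfl⟩ : ∃ k, N = k + 1 := ⟨N - 1, by omega⟩
      exact hpowk k
    have hRHS : (∑ m : Fin (N+1), G m * F'^(m:ℕ)).eval p = 0 := by
      rw [Polynomial.eval_finset_sum]
      apply Finset.sum_eq_zero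
      intro m _
      rcases Nat.eq_zero_or_pos (m : ℕ) with hm | hm
      · rw [hm, pow_zero, mul_one]
        exact hp (G m) (hGI m)
      · obtain ⟨k, hk⟩ : ∃ k, (m:ℕ) = k + 1 := ⟨(m:ℕ) - 1, by omega⟩
        have hcm : Commute ((F'^(m:ℕ)).eval p) p := by
          rw [hk, hpowk k, ← Quaternion.coe_pow]
          exact Quaternion.coe_commute _ p
        rw [NSQ.eval_mul_comm _ hcm, hp (G m) (hGI m), zero_mul]
    have h0 : ((normSq (F.eval p) : ℝ) : Quaternion ℝ)^N = 0 := by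
      rw [← hLHS, hsum]
      exact hRHS
    have h1 : (normSq (F.eval p))^N = 0 := by
      rw [← Quaternion.coe_pow] at h0
      exact NSQ.q_coe_zero_iff.mp h0
    have h2 : normSq (F.eval p) = 0 := by
      have h9 : N ≠ 0 := by omega
      exact pow_eq_zero_iff h9 |>.mp h1
    exact Quaternion.normSq_eq_zero.mp h2
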